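/- The function q(r) = (1 - r²)(1 - sin r) - 2r is strictly decreasing on [0,1], with q(0) = 1 > 0 and q(1) = -2 < 0, hence has a unique root in (0,1). -/

import Mathlib

theorem unique_root_sine (q : ℝ → ℝ)
    (hq : q = fun r => (1 - r^2) * (1 - Real.sin r) - 2*r) :
    StrictAntiOn q (Set.Icc (0:ℝ) 1) ∧ q 0 = 1 ∧ q 1 = -2 ∧
    ∃! r, r ∈ Set.Ioo (0:ℝ) 1 ∧ q r = 0 := by
  subst hq
  have hderiv : ∀ r : ℝ, HasDerivAt (fun r : ℝ => (1 - r^2) * (1 - Real.sin r) - 2*r)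
      ((-(2*r)) * (1 - Real.sin r) + (1 - r^2) * (-Real.cos r) - 2) r := by
    intro r
    have h1 : HasDerivAt (fun r : ℝ => 1 - r^2) (-(2*r)) r := by
      simpa using (hasDerivAt_pow 2 r).const_sub 1
    have h2 : HasDerivAt (fun r : ℝ => 1 - Real.sin r) (-Real.cos r) r := by
      simpa using (Real.hasDerivAt_sin r).const_sub 1
    have h3 : HasDerivAt (fun r : ℝ => 2*r) 2 r := by
      simpa using (hasDerivAt_id r).const_mul 2
    exact (h1.mul h2).sub h3
  have hcont : Continuous (fun r : ℝ => (1 - r^2) * (1 - Real.sin r) - 2*r) := by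
    continuity
  have hanti : StrictAntiOn (fun r : ℝ => (1 - r^2) * (1 - Real.sin r) - 2*r)
      (Set.Icc (0:ℝ) 1) := by
    apply strictAntiOn_of_deriv_neg (convex_Icc 0 1) hcont.continuousOn
    intro x hx
    rw [interior_Icc] at hx
    rw [(hderiv x).deriv]
    have hsin : Real.sin x ≤ 1 := Real.sin_le_one x
    have hcos : 0 ≤ Real.cos x := Real.cos_nonneg_of_mem_Icc
      ⟨by linarith [hx.1, Real.pi_gt_three], by linarith [hx.2, Real.pi_gt_three]⟩
    have hx2 : x^2 ≤ 1 := by nlinarith [hx.1.le, hx.2.le]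
    nlinarith [hx.1, hx.2, mul_nonneg (sub_nonneg.2 hx2) hcos,
      mul_nonneg hx.1.le (sub_nonneg.2 hsin)]
  have hq0 : (fun r : ℝ => (1 - r^2) * (1 - Real.sin r) - 2*r) 0 = 1 := by simp
  have hq1 : (fun r : ℝ => (1 - r^2) * (1 - Real.sin r) - 2*r) 1 = -2 := by norm_num
  refine ⟨hanti, hq0, hq1, ?_⟩
  have hsub := intermediate_value_Ioo' (by norm_num : (0:ℝ) ≤ 1) hcont.continuousOn
  have h0 : (0:ℝ) ∈ Set.Ioo ((fun r : ℝ => (1 - r^2) * (1 - Real.sin r) - 2*r) 1)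
      ((fun r : ℝ => (1 - r^2) * (1 - Real.sin r) - 2*r) 0) := by
    rw [hq0, hq1]; norm_num
  obtain ⟨r, hr, hr0⟩ := hsub h0
  refine ⟨r, ⟨hr, hr0⟩, ?_⟩
  rintro y ⟨hy, hy0⟩
  have := hanti.injOn (Set.mem_Icc.2 ⟨hy.1.le, hy.2.le⟩) (Set.mem_Icc.2 ⟨hr.1.le, hr.2.le⟩)
  exact this (by simp only [] at hy0 hr0; rw [hy0, hr0])
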